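/- Let (L, S) be a Frith frame. Then every element of S is compact in L if and only if for every frame M, every Cauchy map φ : (L, S) → M is a frame homomorphism (i.e., preserves finite meets and arbitrary suprema). -/

import Mathlib

universe u

/-- `S` is a join-dense bounded sublattice of the frame `L`, i.e. `(L, S)` is a
Frith frame. -/
def IsFrith {L : Type*} [Order.Frame L] (S : Set L) : Prop :=
  ⊥ ∈ S ∧ ⊤ ∈ S ∧ (∀ a ∈ S, ∀ b ∈ S, a ⊓ b ∈ S) ∧ (∀ a ∈ S, ∀ b ∈ S, a ⊔ b ∈ S) ∧
    ∀ a : L, ∃ u ⊆ S, a = sSup u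

/-- A Cauchy map `φ : (L, S) → M`: (C1) the restriction of `φ` to `S` is a
bounded lattice homomorphism; (C2) `φ a = ⨆ {φ s | s ∈ S, s ≤ a}` for every
`a`; (C3) `φ s` is complemented in `M` for every `s ∈ S`. -/
def IsCauchyMap {L : Type*} {M : Type*} [Order.Frame L] [Order.Frame M]
    (S : Set L) (φ : L → M) : Prop :=
  (φ ⊥ = ⊥ ∧ φ ⊤ = ⊤ ∧
    ∀ s ∈ S, ∀ t ∈ S, φ (s ⊓ t) = φ s ⊓ φ t ∧ φ (s ⊔ t) = φ s ⊔ φ t) ∧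
  (∀ a : L, φ a = sSup (φ '' {s | s ∈ S ∧ s ≤ a})) ∧
  (∀ s ∈ S, ∃ c : M, IsCompl (φ s) c)

/-- A Frith frame `(L, S)` is coherent (every element of `S`
is compact in `L`) if and only if for every frame `M` every Cauchy map
`φ : (L, S) → M` is a frame homomorphism. -/
theorem frith_coherent_iff_cauchy_maps_are_homs {L : Type u} [Order.Frame L]
    (S : Set L) (hS : IsFrith S) :
    (∀ s ∈ S, IsCompactElement s) ↔
      ∀ (M : Type u) [Order.Frame M] (φ : L → M), IsCauchyMap S φ →
        (φ ⊤ = ⊤ ∧ (∀ a b : L, φ (a ⊓ b) = φ a ⊓ φ b) ∧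
          ∀ A : Set L, φ (sSup A) = sSup (φ '' A)) := by
  classical
  obtain ⟨hbS, htS, hinfS, hsupS, hdense⟩ := hS
  constructor
  · -- coherent → every Cauchy map is a frame hom
    intro hcpt M _ φ hφ
    obtain ⟨⟨hb, ht, hlat⟩, hC2, -⟩ := hφ
    have hmono : ∀ {a b : L}, a ≤ b → φ a ≤ φ b := by
      intro a b hab
      rw [hC2 a, hC2 b]
      exact sSup_le_sSup (Set.image_mono fun s hs => ⟨hs.1, hs.2.trans hab⟩)
    have hfin : ∀ F : Finset L, ↑F ⊆ S →
        (F.sup id ∈ S ∧ φ (F.sup id) = F.sup fun t => φ t) := by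
      intro F
      induction F using Finset.induction_on with
      | empty => intro _; simpa using ⟨hbS, hb⟩
      | @insert x F' hx ih =>
        intro hsub
        have hxS : x ∈ S := hsub (Finset.mem_insert_self _ _)
        have hF'S : ↑F' ⊆ S := fun t ht => hsub (Finset.mem_insert_of_mem ht)
        obtain ⟨h1, h2⟩ := ih hF'S
        constructor
        · rw [Finset.sup_insert]
          exact hsupS _ hxS _ h1
        · rw [Finset.sup_insert, Finset.sup_insert]
          simp only [id_eq]
          rw [(hlat x hxS _ h1).2, h2]
    refine ⟨ht, ?_, ?_⟩
    · intro a b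
      apply le_antisymm
      · exact le_inf (hmono inf_le_left) (hmono inf_le_right)
      · rw [hC2 a, hC2 b, sSup_inf_sSup]
        apply iSup_le
        rintro ⟨p, q⟩
        apply iSup_le
        rintro ⟨⟨s, ⟨hsS, hsa⟩, rfl⟩, ⟨t, ⟨htS, htb⟩, rfl⟩⟩
        rw [← (hlat s hsS t htS).1, hC2 (a ⊓ b)]
        exact le_sSup ⟨s ⊓ t, ⟨hinfS s hsS t htS, inf_le_inf hsa htb⟩, rfl⟩
    · intro A
      apply le_antisymm
      · rw [hC2 (sSup A)]
        apply sSup_le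
        rintro _ ⟨s, ⟨hsS, hsle⟩, rfl⟩
        have hAU : sSup A ≤ sSup {t | t ∈ S ∧ ∃ a ∈ A, t ≤ a} := by
          apply sSup_le; intro a ha
          obtain ⟨v, hvS, hv⟩ := hdense a
          rw [hv]
          apply sSup_le; intro t htv
          exact le_sSup ⟨hvS htv, a, ha, hv ▸ le_sSup htv⟩
        have hcs := hcpt s hsS
        rw [CompleteLattice.isCompactElement_iff_exists_le_sSup_of_le_sSup] at hcs
        obtain ⟨F, hFU, hsF⟩ := hcs _ (hsle.trans hAU)
        have hFS : ↑F ⊆ S := fun t ht => (hFU ht).1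
        calc φ s ≤ φ (F.sup id) := hmono hsF
          _ = F.sup fun t => φ t := (hfin F hFS).2
          _ ≤ sSup (φ '' A) := by
            apply Finset.sup_le; intro t htF
            obtain ⟨a, haA, hta⟩ := (hFU htF).2
            exact (hmono hta).trans (le_sSup ⟨a, haA, rfl⟩)
      · apply sSup_le
        rintro _ ⟨a, haA, rfl⟩
        exact hmono (le_sSup haA)
  · -- every Cauchy map is a frame hom → coherent
    intro hhom s₀ hs₀S
    rw [CompleteLattice.isCompactElement_iff_exists_le_sSup_of_le_sSup]
    intro A hcov
    by_contra hnc
    push_neg at hnc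
    -- the sublattice `K` with carrier `S`
    let K : Sublattice L :=
      ⟨S, fun a ha b hb => hsupS a ha b hb, fun a ha b hb => hinfS a ha b hb⟩
    letI : BoundedOrder K :=
      { top := ⟨⊤, htS⟩
        le_top := fun a => (le_top : (a : L) ≤ ⊤)
        bot := ⟨⊥, hbS⟩
        bot_le := fun a => (bot_le : (⊥ : L) ≤ (a : L)) }
    -- the ideal of elements of `S` finitely covered by `A`
    let D : Order.Ideal K :=
      { carrier := {s : K | ∃ F : Finset L, ↑F ⊆ A ∧ (s : L) ≤ F.sup id}
        lower' := by
          rintro a b hba ⟨F, hFA, haF⟩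
          exact ⟨F, hFA, le_trans (show (b : L) ≤ a from hba) haF⟩
        nonempty' := ⟨⟨⊥, hbS⟩, ∅, by simp, by simp⟩
        directed' := by
          rintro a ⟨F₁, hF₁, ha₁⟩ b ⟨F₂, hF₂, hb₂⟩
          refine ⟨a ⊔ b, ⟨F₁ ∪ F₂, ?_, ?_⟩, le_sup_left, le_sup_right⟩
          · rw [Finset.coe_union]
            exact Set.union_subset hF₁ hF₂
          · rw [Finset.sup_union]
            exact sup_le (ha₁.trans le_sup_left) (hb₂.trans le_sup_right) }
    have hdisj0 : Disjoint ((Order.PFilter.principal (⟨s₀, hs₀S⟩ : K)) : Set K)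
        ((D : Set K) : Set K) := by
      rw [Set.disjoint_left]
      rintro x hx ⟨F, hFA, hxF⟩
      exact hnc F hFA
        (le_trans (show s₀ ≤ (x : L) from Order.PFilter.mem_principal.1 hx) hxF)
    obtain ⟨J, hJprime, hDJ, hdisj⟩ :=
      DistribLattice.prime_ideal_of_disjoint_filter_ideal hdisj0
    have hs₀J : (⟨s₀, hs₀S⟩ : K) ∉ J :=
      Set.disjoint_left.1 hdisj (Order.PFilter.mem_principal.2 le_rfl)
    -- the Cauchy map into `Set PUnit`
    set φ : L → Set PUnit.{u + 1} :=
      fun a => {_x | ∃ s : L, ∃ hs : s ∈ S, s ≤ a ∧ (⟨s, hs⟩ : K) ∉ J} with hφdef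
    have hφS : ∀ (s : L) (hs : s ∈ S), φ s = {_x : PUnit | (⟨s, hs⟩ : K) ∉ J} := by
      intro s hs
      ext x
      constructor
      · rintro ⟨t, ht, hts, htJ⟩
        exact fun hsJ => htJ (J.lower (show (⟨t, ht⟩ : K) ≤ ⟨s, hs⟩ from hts) hsJ)
      · intro h
        exact ⟨s, hs, le_rfl, h⟩
    have hcauchy : IsCauchyMap S φ := by
      refine ⟨⟨?_, ?_, ?_⟩, ?_, ?_⟩
      · -- bottom
        rw [Set.bot_eq_empty]
        apply Set.eq_empty_iff_forall_notMem.2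
        rintro x ⟨s, hs, hle, hJ⟩
        exact hJ (J.lower (show (⟨s, hs⟩ : K) ≤ ⟨⊥, hbS⟩ from hle) J.bot_mem)
      · -- top
        apply Set.eq_univ_of_forall
        intro x
        exact ⟨⊤, htS, le_rfl,
          fun h => hs₀J (J.lower (show (⟨s₀, hs₀S⟩ : K) ≤ ⟨⊤, htS⟩ from le_top) h)⟩
      · -- lattice hom on S
        intro s hs t ht
        constructor
        · rw [hφS s hs, hφS t ht, hφS (s ⊓ t) (hinfS s hs t ht)]
          ext x
          simp only [Set.mem_setOf_eq, Set.mem_inter_iff]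
          constructor
          · intro h
            exact ⟨fun h1 => h (J.lower (show (⟨s ⊓ t, _⟩ : K) ≤ ⟨s, hs⟩ from inf_le_left) h1),
              fun h2 => h (J.lower (show (⟨s ⊓ t, _⟩ : K) ≤ ⟨t, ht⟩ from inf_le_right) h2)⟩
          · rintro ⟨h1, h2⟩ hmem
            rcases hJprime.mem_or_mem
              (show (⟨s, hs⟩ : K) ⊓ (⟨t, ht⟩ : K) ∈ J from hmem) with h | h
            · exact h1 h
            · exact h2 h
        · rw [hφS s hs, hφS t ht, hφS (s ⊔ t) (hsupS s hs t ht)]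
          ext x
          simp only [Set.sup_eq_union, Set.mem_setOf_eq, Set.mem_union]
          constructor
          · intro h
            by_contra hc
            push_neg at hc
            obtain ⟨h1, h2⟩ := hc
            exact h (show ((⟨s, hs⟩ : K) ⊔ (⟨t, ht⟩ : K) : K) ∈ J from Order.Ideal.sup_mem h1 h2)
          · rintro (h | h) hmem
            · exact h (J.lower (show (⟨s, hs⟩ : K) ≤ ⟨s ⊔ t, _⟩ from le_sup_left) hmem)
            · exact h (J.lower (show (⟨t, ht⟩ : K) ≤ ⟨s ⊔ t, _⟩ from le_sup_right) hmem)
      · -- C2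
        intro a
        ext x
        rw [Set.sSup_eq_sUnion]
        constructor
        · rintro ⟨s, hs, hsa, hJ⟩
          exact ⟨φ s, ⟨s, ⟨hs, hsa⟩, rfl⟩, ⟨s, hs, le_rfl, hJ⟩⟩
        · rintro ⟨_, ⟨s, ⟨hsS, hsa⟩, rfl⟩, t, htS, hts, htJ⟩
          exact ⟨t, htS, hts.trans hsa, htJ⟩
      · -- C3
        intro s _
        exact ⟨(φ s)ᶜ, isCompl_compl⟩
    obtain ⟨-, -, hsup⟩ := hhom (Set PUnit.{u + 1}) φ hcauchy
    have hx : PUnit.unit ∈ φ (sSup A) := ⟨s₀, hs₀S, hcov, hs₀J⟩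
    rw [hsup A, Set.sSup_eq_sUnion] at hx
    obtain ⟨_, ⟨a, haA, rfl⟩, s, hs, hsa, hJ⟩ := hx
    refine hJ (hDJ ⟨{a}, ?_, ?_⟩)
    · simpa using haA
    · simpa using hsa
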